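/- Let f : ℕ → ℝ satisfy f(n) ≤ f(⌈Real.sqrt n⌉) + c · (Real.logb 2 n) / w for all n ≥ 4, and f(n) ≤ c / w for n < 4, where c ≥ 0 and w ≥ 1. Then f(n) ≤ 3 · c · (Real.logb 2 n) / w for all n ≥ 4. -/

import Mathlib

theorem stmt_2 (f : ℕ → ℝ) (c w : ℝ) (hc : 0 ≤ c) (hw : 1 ≤ w)
    (hrec : ∀ n : ℕ, 4 ≤ n → f n ≤ f ⌈Real.sqrt n⌉₊ + c * Real.logb 2 n / w)
    (hbase : ∀ n : ℕ, n < 4 → f n ≤ c / w) :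
    ∀ n : ℕ, 4 ≤ n → f n ≤ 3 * c * Real.logb 2 n / w := by
  have hw0 : (0:ℝ) < w := lt_of_lt_of_le one_pos hw
  have hlog2 : (0:ℝ) < Real.log 2 := Real.log_pos (by norm_num)
  intro n
  induction n using Nat.strong_induction_on with
  | _ n ih =>
  intro hn4
  set m := ⌈Real.sqrt n⌉₊ with hm
  have hn4' : (4:ℝ) ≤ (n:ℝ) := by exact_mod_cast hn4
  have hlogn : 2 ≤ Real.logb 2 n := by
    have h4 : Real.logb 2 4 = 2 := by
      rw [show (4:ℝ) = 2^(2:ℕ) by norm_num, Real.logb_pow,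
        Real.logb_self_eq_one (by norm_num)]
      norm_num
    calc (2:ℝ) = Real.logb 2 4 := h4.symm
      _ ≤ Real.logb 2 n := Real.logb_le_logb_of_le (by norm_num) (by norm_num) hn4'
  have hrecn := hrec n hn4
  rw [← hm] at hrecn
  by_cases hm4 : m < 4
  · have hb := hbase m hm4
    have h1 : c / w + c * Real.logb 2 n / w ≤ 3 * c * Real.logb 2 n / w := by
      rw [← add_div, div_le_div_iff_of_pos_right hw0]
      nlinarith [mul_le_mul_of_nonneg_left hlogn hc]
    linarith
  · push_neg at hm4
    have hm4' : (4:ℝ) ≤ (m:ℝ) := by exact_mod_cast hm4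
    have hlt : ((m:ℝ) - 1)^2 < (n:ℝ) := by
      have h1 : ((m - 1 : ℕ) : ℝ) < Real.sqrt n := by
        have : (m - 1 : ℕ) < m := Nat.sub_lt (by omega) one_pos
        exact (Nat.lt_ceil).mp this
      have h2 : ((m:ℝ) - 1) = ((m - 1 : ℕ) : ℝ) := by
        push_cast [Nat.cast_sub (by omega : 1 ≤ m)]; ring
      rw [h2]
      have hnn : (0:ℝ) ≤ ((m-1:ℕ):ℝ) := Nat.cast_nonneg _
      nlinarith [Real.sq_sqrt (by positivity : (0:ℝ) ≤ (n:ℝ)), h1]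
    have hcube : (m:ℝ)^3 ≤ (n:ℝ)^2 := by
      nlinarith [hlt, hm4', sq_nonneg ((m:ℝ) - 4), sq_nonneg ((m:ℝ) - 1)]
    have hmltn : m < n := by
      by_contra hcon
      push_neg at hcon
      have : (n:ℝ) ≤ (m:ℝ) := by exact_mod_cast hcon
      nlinarith [hcube, hm4', hn4']
    have ihm := ih m hmltn hm4
    have hlogm : 3 * Real.logb 2 m ≤ 2 * Real.logb 2 n := by
      have hmpos : (0:ℝ) < (m:ℝ) := by positivity
      have hle : Real.log ((m:ℝ)^3) ≤ Real.log ((n:ℝ)^2) := by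
        apply Real.log_le_log (by positivity) hcube
      rw [Real.log_pow, Real.log_pow] at hle
      push_cast at hle
      simp only [Real.logb]
      rw [show 3 * (Real.log (m:ℝ) / Real.log 2) = (3 * Real.log (m:ℝ)) / Real.log 2 from by
            ring,
          show 2 * (Real.log (n:ℝ) / Real.log 2) = (2 * Real.log (n:ℝ)) / Real.log 2 from by
            ring,
          div_le_div_iff_of_pos_right hlog2]
      exact hle
    have hkey : 3 * c * Real.logb 2 m / w + c * Real.logb 2 n / w ≤
        3 * c * Real.logb 2 n / w := by
      rw [← add_div, div_le_div_iff_of_pos_right hw0]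
      nlinarith [mul_le_mul_of_nonneg_left hlogm hc]
    linarith
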